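/- Leibniz rule for higher covariant derivatives: if α ∈ C∞(E), β ∈ C∞(F), and v ∈ C∞(⊗^j TM), then (∇⊗∇̄)^j_v(α ⊗_{C∞(M)} β) = (∇^{j−•}_{v_{(1)}} α) ⊗_{C∞(M)} (∇̄^•_{v_{(2)}} β), where Δv = v_{(1)} ⊗ v_{(2)} is the tensor coproduct in Sweedler notation and • is the tensor degree of v_{(2)}. -/
import Mathlib


/-!
Algebraic framework for manifolds with connection:
`R` plays the role of the ring of smooth functions `C^∞(M)`,
`V` the `C^∞(M)`-module of smooth vector fields `C^∞(TM)`,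
`VFAct` the action of vector fields on functions as derivations,
`Conn` a connection (covariant derivative) on the module of sections `E`
of a vector bundle, and `hcd` the higher covariant derivative defined
inductively by
`∇^{j+1}_{X₀,…,X_j} α = ∇_{X₀}(∇^j_{X₁,…,X_j} α) − Σ_k ∇^j_{X₁,…,∇̂_{X₀}X_k,…,X_j} α`.
-/

open TensorProduct

/-- The action of vector fields on smooth functions as (ℝ-linear) derivations. -/
structure VFAct (R : Type*) [CommRing R] [Algebra ℝ R]
    (V : Type*) [AddCommGroup V] [Module R V] where
  act : V → R → R
  act_add_right : ∀ X f g, act X (f + g) = act X f + act X g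
  act_mul_right : ∀ X f g, act X (f * g) = act X f * g + f * act X g
  act_add_left : ∀ X Y f, act (X + Y) f = act X f + act Y f
  act_smul_left : ∀ (f : R) X g, act (f • X) g = f * act X g
  act_algebraMap : ∀ X (r : ℝ), act X (algebraMap ℝ R r) = 0

/-- A connection (covariant derivative) on the `R = C^∞(M)`-module `E` of sections of a
smooth vector bundle, relative to the action `D` of vector fields on functions. -/
structure Conn (R : Type*) [CommRing R] [Algebra ℝ R]
    (V : Type*) [AddCommGroup V] [Module R V]
    (E : Type*) [AddCommGroup E] [Module R E]
    (D : VFAct R V) where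
  d : V → E → E
  d_add_right : ∀ X α β, d X (α + β) = d X α + d X β
  d_smul_right : ∀ X (f : R) α, d X (f • α) = D.act X f • α + f • d X α
  d_add_left : ∀ X Y α, d (X + Y) α = d X α + d Y α
  d_smul_left : ∀ (f : R) X α, d (f • X) α = f • d X α

variable {R : Type*} [CommRing R] [Algebra ℝ R]
variable {V : Type*} [AddCommGroup V] [Module R V]

/-- The higher covariant derivative `∇^j_{X₁,…,X_j}` along a tuple of vector fields,
defined inductively by
`∇^{j+1}_{X₀,…,X_j} α = ∇_{X₀}(∇^j_{X₁,…,X_j} α) − Σ_k ∇^j_{X₁,…,∇̂_{X₀}X_k,…,X_j} α`. -/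
def hcd {E : Type*} [AddCommGroup E] [Module R E] {D : VFAct R V}
    (cT : Conn R V V D) (cE : Conn R V E D) : (j : ℕ) → (Fin j → V) → E → E
  | 0, _, α => α
  | j + 1, X, α =>
      cE.d (X 0) (hcd cT cE j (fun k => X k.succ) α)
        - ∑ k : Fin j,
            hcd cT cE j (Function.update (fun m => X m.succ) k (cT.d (X 0) (X k.succ))) α

/-- The connection `∇̂` is torsion-free: `∇̂_X Y − ∇̂_Y X = [X,Y]`, where the Lie bracket
is characterized by its action on functions. -/
def TorsionFree {D : VFAct R V} (cT : Conn R V V D) : Prop :=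
  ∀ X Y f, D.act (cT.d X Y - cT.d Y X) f = D.act X (D.act Y f) - D.act Y (D.act X f)
/-!
Tensor-field machinery: `TensorAlgebra R V` plays the role of the space
`C^∞(⊗(TM))` of smooth contravariant tensor fields of globally finite order,
`comul` is the tensor coproduct `Δ` (the unique morphism of `R`-algebras with
`Δ X = X ⊗ 1 + 1 ⊗ X` for vector fields `X`), `IsDerivExt` says that a
connection on an algebra of sections is the Leibniz extension of a connection
on its generators, `IsHigherDeriv` characterizes the tensorial extension
`v ↦ ∇^j_v` (for `v ∈ C^∞(⊗^j TM)`) of the higher covariant derivative, via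
`∇^0_f = f·` and `∇^{j+1}_{X₀⊗w} = ∇_{X₀} ∘ ∇^j_w − ∇^j_{∇̂_{X₀} w}`,
and `IsHomConn` characterizes the induced connection on a Hom-bundle. -/

/-- The tensor coproduct on `C^∞(⊗(TM))`: the unique morphism of `R`-algebras
(for the tensor product) with `Δ X = X ⊗ 1 + 1 ⊗ X` for vector fields `X`. -/
noncomputable def comul (R : Type*) (V : Type*) [CommRing R] [AddCommGroup V] [Module R V] :
    TensorAlgebra R V →ₐ[R] TensorAlgebra R V ⊗[R] TensorAlgebra R V :=
  TensorAlgebra.lift R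
    { toFun := fun x => TensorAlgebra.ι R x ⊗ₜ[R] 1 + 1 ⊗ₜ[R] TensorAlgebra.ι R x
      map_add' := by
        intro x y
        simp only [map_add, TensorProduct.add_tmul, TensorProduct.tmul_add]
        abel
      map_smul' := by
        intro c x
        simp only [map_smul, RingHom.id_apply, TensorProduct.smul_tmul',
          TensorProduct.tmul_smul, smul_add] }

/-- `cB` is the Leibniz-rule extension of the connection `cE` to an algebra of sections `B`
generated by the image of `j : E → B`. -/
structure IsDerivExt {R : Type*} [CommRing R] [Algebra ℝ R]
    {V : Type*} [AddCommGroup V] [Module R V]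
    {E : Type*} [AddCommGroup E] [Module R E]
    {B : Type*} [Ring B] [Algebra R B] {D : VFAct R V}
    (cE : Conn R V E D) (cB : Conn R V B D) (j : E → B) : Prop where
  d_gen : ∀ X e, cB.d X (j e) = j (cE.d X e)
  d_mul : ∀ X a b, cB.d X (a * b) = cB.d X a * b + a * cB.d X b

/-- `N` is the tensorial extension `v ↦ ∇^j_v` of the higher covariant derivative of the
connection `cE`, where `v` ranges over tensor fields (`cA` is the Leibniz extension of the
connection on `TM` to `⊗(TM)`).  It is `C^∞(M)`-linear (tensorial) in `v`, satisfies
`∇^0_f α = f • α`, the inductive formula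
`∇_{X₀ ⊗ w} = ∇_{X₀} ∘ ∇_w − ∇_{∇̂_{X₀} w}`, and is ℝ-linear in the section. -/
structure IsHigherDeriv {R : Type*} [CommRing R] [Algebra ℝ R]
    {V : Type*} [AddCommGroup V] [Module R V]
    {E : Type*} [AddCommGroup E] [Module R E] {D : VFAct R V}
    (cE : Conn R V E D) (cA : Conn R V (TensorAlgebra R V) D)
    (N : TensorAlgebra R V →ₗ[R] E → E) : Prop where
  n_algebraMap : ∀ (f : R) (α : E), N (algebraMap R (TensorAlgebra R V) f) α = f • α
  n_mul_ι : ∀ (X : V) (w : TensorAlgebra R V) (α : E),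
      N (TensorAlgebra.ι R X * w) α = cE.d X (N w α) - N (cA.d X w) α
  n_add_right : ∀ v (α β : E), N v (α + β) = N v α + N v β
  n_smul_real : ∀ v (r : ℝ) (α : E), N v (algebraMap ℝ R r • α) = algebraMap ℝ R r • N v α

/-- `cH` is the connection on the Hom-bundle `Hom(E,F)` induced by `cE` and `cF`:
`(∇_X T)(α) = ∇^F_X (T α) − T (∇^E_X α)`. -/
def IsHomConn {R : Type*} [CommRing R] [Algebra ℝ R]
    {V : Type*} [AddCommGroup V] [Module R V]
    {E : Type*} [AddCommGroup E] [Module R E]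
    {F : Type*} [AddCommGroup F] [Module R F] {D : VFAct R V}
    (cE : Conn R V E D) (cF : Conn R V F D) (cH : Conn R V (E →ₗ[R] F) D) : Prop :=
  ∀ X T α, (cH.d X T) α = cF.d X (T α) - T (cE.d X α)

open scoped Pointwise

section Aux

variable {R : Type*} [CommRing R] [Algebra ℝ R]
variable {V : Type*} [AddCommGroup V] [Module R V]

/-- Monomials in the tensor algebra. -/
noncomputable def monAux (R : Type*) [CommRing R] {V : Type*} [AddCommGroup V] [Module R V]
    (l : List V) : TensorAlgebra R V :=
  (l.map (TensorAlgebra.ι R)).prod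

@[simp] lemma monAux_nil : monAux R ([] : List V) = 1 := rfl

@[simp] lemma monAux_cons (x : V) (l : List V) :
    monAux R (x :: l) = TensorAlgebra.ι R x * monAux R l := by
  simp [monAux]

lemma monAux_append (l l' : List V) :
    monAux R (l ++ l') = monAux R l * monAux R l' := by
  simp [monAux]

lemma monAux_span_top :
    Submodule.span R (Set.range (monAux R (V := V))) = ⊤ := by
  have main : ∀ x : TensorAlgebra R V, x ∈ Submodule.span R (Set.range (monAux R (V := V))) := by
    intro x
    induction x using TensorAlgebra.induction with
    | algebraMap r =>
        rw [Algebra.algebraMap_eq_smul_one]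
        exact Submodule.smul_mem _ _ (Submodule.subset_span ⟨[], rfl⟩)
    | ι x => exact Submodule.subset_span ⟨[x], by simp⟩
    | mul a b ha hb =>
        have hsub : (Set.range (monAux R (V := V))) * (Set.range (monAux R (V := V)))
            ⊆ Set.range (monAux R (V := V)) := by
          rintro _ ⟨_, ⟨l, rfl⟩, _, ⟨l', rfl⟩, rfl⟩
          exact ⟨l ++ l', by rw [monAux_append]⟩
        have h2 := Submodule.mul_mem_mul ha hb
        rw [Submodule.span_mul_span] at h2
        exact Submodule.span_mono hsub h2
    | add a b ha hb => exact Submodule.add_mem _ ha hb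
  exact eq_top_iff.mpr fun x _ => main x

variable {E : Type*} [AddCommGroup E] [Module R E] {D : VFAct R V}

lemma Conn.d_zero (c : Conn R V E D) (X : V) : c.d X 0 = 0 := by
  have := c.d_add_right X 0 0
  simpa using this.symm

lemma Conn.d_sub (c : Conn R V E D) (X : V) (a b : E) :
    c.d X (a - b) = c.d X a - c.d X b := by
  have h := c.d_add_right X (a - b) b
  rw [sub_add_cancel] at h
  rw [h]; abel

variable {cT : Conn R V V D} {cA : Conn R V (TensorAlgebra R V) D}

lemma IsDerivExt.d_one (hA : IsDerivExt cT cA (TensorAlgebra.ι R)) (X : V) :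
    cA.d X 1 = 0 := by
  have := hA.d_mul X 1 1
  simp only [mul_one, one_mul] at this
  exact (left_eq_add.mp this)

/-- The derivation `∇̂_X ⊗ 1 + 1 ⊗ ∇̂_X` on `⊗(TM) ⊗ ⊗(TM)`, as an additive map. -/
noncomputable def derivT (cA : Conn R V (TensorAlgebra R V) D) (X : V) :
    TensorAlgebra R V ⊗[R] TensorAlgebra R V →+ TensorAlgebra R V ⊗[R] TensorAlgebra R V :=
  TensorProduct.liftAddHom
    { toFun := fun a =>
        { toFun := fun b => cA.d X a ⊗ₜ[R] b + a ⊗ₜ[R] cA.d X b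
          map_zero' := by simp [cA.d_zero]
          map_add' := fun b b' => by
            simp only [cA.d_add_right, TensorProduct.tmul_add]
            abel }
      map_zero' := by
        ext b; simp [cA.d_zero]
      map_add' := fun a a' => by
        ext b
        simp only [cA.d_add_right, TensorProduct.add_tmul, AddMonoidHom.coe_mk,
          ZeroHom.coe_mk, AddMonoidHom.add_apply]
        abel }
    (fun r a b => by
      simp only [AddMonoidHom.coe_mk, ZeroHom.coe_mk, cA.d_smul_right,
        TensorProduct.add_tmul, TensorProduct.tmul_add, TensorProduct.smul_tmul,
        TensorProduct.tmul_smul]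
      abel)

@[simp] lemma derivT_tmul (X : V) (a b : TensorAlgebra R V) :
    derivT cA X (a ⊗ₜ[R] b) = cA.d X a ⊗ₜ[R] b + a ⊗ₜ[R] cA.d X b := by
  simp [derivT]

lemma derivT_mul (hA : IsDerivExt cT cA (TensorAlgebra.ι R)) (X : V)
    (u w : TensorAlgebra R V ⊗[R] TensorAlgebra R V) :
    derivT cA X (u * w) = derivT cA X u * w + u * derivT cA X w := by
  induction u with
  | zero => simp
  | tmul a b =>
      induction w with
      | zero => simp
      | tmul c e =>
          simp only [Algebra.TensorProduct.tmul_mul_tmul, derivT_tmul, hA.d_mul,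
            TensorProduct.add_tmul, TensorProduct.tmul_add, add_mul, mul_add]
          abel
      | add w w' hw hw' =>
          simp only [mul_add, map_add, hw, hw']
          abel
  | add u u' hu hu' =>
      simp only [add_mul, map_add, hu, hu']
      abel

lemma comul_ι (x : V) :
    comul R V (TensorAlgebra.ι R x)
      = TensorAlgebra.ι R x ⊗ₜ[R] 1 + 1 ⊗ₜ[R] TensorAlgebra.ι R x := by
  simp [comul, TensorAlgebra.lift_ι_apply]

lemma comul_d (hA : IsDerivExt cT cA (TensorAlgebra.ι R)) (X : V)
    (v : TensorAlgebra R V) :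
    comul R V (cA.d X v) = derivT cA X (comul R V v) := by
  induction v using TensorAlgebra.induction with
  | algebraMap r =>
      have h1 : cA.d X (algebraMap R (TensorAlgebra R V) r) = D.act X r • 1 := by
        rw [Algebra.algebraMap_eq_smul_one, cA.d_smul_right, hA.d_one, smul_zero, add_zero]
      have h2 : comul R V (algebraMap R (TensorAlgebra R V) r)
          = (algebraMap R (TensorAlgebra R V) r) ⊗ₜ[R] 1 := by
        rw [(comul R V).commutes r, Algebra.TensorProduct.algebraMap_apply]
      rw [h1, map_smul, map_one, h2, derivT_tmul, hA.d_one, TensorProduct.tmul_zero, add_zero,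
        h1]
      simp [TensorProduct.smul_tmul', Algebra.TensorProduct.one_def]
  | ι x =>
      simp only [hA.d_gen, comul_ι, map_add, derivT_tmul, hA.d_one,
        TensorProduct.tmul_zero, TensorProduct.zero_tmul, add_zero, zero_add]
  | mul a b ha hb =>
      rw [hA.d_mul, map_add, map_mul, map_mul, map_mul, ha, hb, derivT_mul hA]
  | add a b ha hb =>
      rw [cA.d_add_right, map_add, map_add, ha, hb, map_add]

lemma d_monAux_mem (hA : IsDerivExt cT cA (TensorAlgebra.ι R)) (X : V) (l : List V) :
    cA.d X (monAux R l)
      ∈ Submodule.span R {x | ∃ l' : List V, l'.length = l.length ∧ monAux R l' = x} := by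
  induction l with
  | nil =>
      simp only [monAux_nil, hA.d_one]
      exact Submodule.zero_mem _
  | cons Y t ih =>
      rw [monAux_cons, hA.d_mul, hA.d_gen]
      refine Submodule.add_mem _ ?_ ?_
      · exact Submodule.subset_span ⟨cT.d X Y :: t, by simp⟩
      · refine Submodule.span_induction
          (p := fun v _ => TensorAlgebra.ι R Y * v
            ∈ Submodule.span R
              {x | ∃ l' : List V, l'.length = (Y :: t).length ∧ monAux R l' = x})
          ?_ ?_ ?_ ?_ ih
        · rintro _ ⟨l', hl', rfl⟩
          exact Submodule.subset_span ⟨Y :: l', by simp [hl']⟩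
        · simp only [mul_zero]; exact Submodule.zero_mem _
        · intro x y _ _ hx hy
          rw [mul_add]; exact Submodule.add_mem _ hx hy
        · intro r x _ hx
          rw [mul_smul_comm]; exact Submodule.smul_mem _ _ hx

end Aux

section Main

variable {R : Type*} [CommRing R] [Algebra ℝ R]
variable {V : Type*} [AddCommGroup V] [Module R V]
variable {E : Type*} [AddCommGroup E] [Module R E]
variable {F : Type*} [AddCommGroup F] [Module R F]
variable {D : VFAct R V}

/-- The bilinear "Sweedler" map `x ⊗ y ↦ (∇_x α) ⊗ (∇̄_y β)`. -/
noncomputable def phiAux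
    (NE : TensorAlgebra R V →ₗ[R] E → E) (NF : TensorAlgebra R V →ₗ[R] F → F)
    (α : E) (β : F) :
    TensorAlgebra R V ⊗[R] TensorAlgebra R V →ₗ[R] E ⊗[R] F :=
  TensorProduct.map
    ((LinearMap.proj α : (E → E) →ₗ[R] E).comp NE)
    ((LinearMap.proj β : (F → F) →ₗ[R] F).comp NF)

@[simp] lemma phiAux_tmul
    (NE : TensorAlgebra R V →ₗ[R] E → E) (NF : TensorAlgebra R V →ₗ[R] F → F)
    (α : E) (β : F) (a b : TensorAlgebra R V) :
    phiAux NE NF α β (a ⊗ₜ[R] b) = NE a α ⊗ₜ[R] NF b β := by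
  simp [phiAux]

lemma phiAux_key {cT : Conn R V V D}
    (cE : Conn R V E D) (cF : Conn R V F D) (cEF : Conn R V (E ⊗[R] F) D)
    (hEF : ∀ (X : V) (α : E) (β : F),
      cEF.d X (α ⊗ₜ[R] β) = cE.d X α ⊗ₜ[R] β + α ⊗ₜ[R] cF.d X β)
    {cA : Conn R V (TensorAlgebra R V) D}
    {NE : TensorAlgebra R V →ₗ[R] E → E} (hNE : IsHigherDeriv cE cA NE)
    {NF : TensorAlgebra R V →ₗ[R] F → F} (hNF : IsHigherDeriv cF cA NF)
    (α : E) (β : F) (X : V)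
    (u : TensorAlgebra R V ⊗[R] TensorAlgebra R V) :
    phiAux NE NF α β
        ((TensorAlgebra.ι R X ⊗ₜ[R] 1 + 1 ⊗ₜ[R] TensorAlgebra.ι R X) * u)
      = cEF.d X (phiAux NE NF α β u) - phiAux NE NF α β (derivT cA X u) := by
  induction u with
  | zero => simp [cEF.d_zero]
  | tmul a b =>
      simp only [add_mul, Algebra.TensorProduct.tmul_mul_tmul, one_mul, map_add,
        phiAux_tmul, hNE.n_mul_ι, hNF.n_mul_ι, hEF, derivT_tmul,
        TensorProduct.sub_tmul, TensorProduct.tmul_sub]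
      abel
  | add u u' hu hu' =>
      simp only [mul_add, map_add, hu, hu', cEF.d_add_right]
      abel

end Main

/-- Leibniz rule for higher covariant derivatives.
If `α ∈ C^∞(E)`, `β ∈ C^∞(F)` and `v ∈ C^∞(⊗^j TM)`, then
`(∇⊗∇̄)^j_v (α ⊗ β) = (∇^{j−•}_{v₍₁₎} α) ⊗ (∇̄^•_{v₍₂₎} β)`, where `Δ v = v₍₁₎ ⊗ v₍₂₎`
is the tensor coproduct.  Here `cEF` is the tensor product connection on `E ⊗ F`
(characterized by `hEF`), `NE`, `NF`, `NEF` are the tensorial higher covariant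
derivatives on `E`, `F`, `E ⊗ F`, and the right-hand side is the linear map
`x ⊗ y ↦ (∇_x α) ⊗ (∇̄_y β)` applied to `Δ v`. -/
theorem statement1
    {R : Type*} [CommRing R] [Algebra ℝ R]
    {V : Type*} [AddCommGroup V] [Module R V]
    {E : Type*} [AddCommGroup E] [Module R E]
    {F : Type*} [AddCommGroup F] [Module R F]
    {D : VFAct R V} (cT : Conn R V V D)
    (cE : Conn R V E D) (cF : Conn R V F D)
    (cEF : Conn R V (E ⊗[R] F) D)
    (hEF : ∀ (X : V) (α : E) (β : F),
      cEF.d X (α ⊗ₜ[R] β) = cE.d X α ⊗ₜ[R] β + α ⊗ₜ[R] cF.d X β)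
    (cA : Conn R V (TensorAlgebra R V) D)
    (hA : IsDerivExt cT cA (TensorAlgebra.ι R))
    (NE : TensorAlgebra R V →ₗ[R] E → E) (hNE : IsHigherDeriv cE cA NE)
    (NF : TensorAlgebra R V →ₗ[R] F → F) (hNF : IsHigherDeriv cF cA NF)
    (NEF : TensorAlgebra R V →ₗ[R] (E ⊗[R] F) → (E ⊗[R] F))
    (hNEF : IsHigherDeriv cEF cA NEF) :
    ∀ (v : TensorAlgebra R V) (α : E) (β : F),
      NEF v (α ⊗ₜ[R] β) =
        (TensorProduct.map
            ((LinearMap.proj α : (E → E) →ₗ[R] E).comp NE)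
            ((LinearMap.proj β : (F → F) →ₗ[R] F).comp NF))
          (comul R V v) := by
  intro v α β
  classical
  have key := phiAux_key (cT := cT) cE cF cEF hEF hNE hNF
  have mainmon : ∀ (n : ℕ) (l : List V), l.length = n → ∀ (α : E) (β : F),
      NEF (monAux R l) (α ⊗ₜ[R] β) = phiAux NE NF α β (comul R V (monAux R l)) := by
    intro n
    induction n with
    | zero =>
        intro l hl α β
        rw [List.length_eq_zero_iff] at hl
        subst hl
        rw [monAux_nil, map_one (comul R V), Algebra.TensorProduct.one_def, phiAux_tmul,
          show (1 : TensorAlgebra R V) = algebraMap R (TensorAlgebra R V) 1 from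
            (map_one _).symm, hNEF.n_algebraMap, hNE.n_algebraMap, hNF.n_algebraMap,
          one_smul, one_smul, one_smul]
    | succ n ih =>
        intro l hl α β
        cases l with
        | nil => simp at hl
        | cons X t =>
            have ht : t.length = n := by simpa using hl
            have IHspan : ∀ w ∈ Submodule.span R
                {x | ∃ l' : List V, l'.length = n ∧ monAux R l' = x},
                NEF w (α ⊗ₜ[R] β) = phiAux NE NF α β (comul R V w) := by
              intro w hw
              refine Submodule.span_induction
                (p := fun w _ => NEF w (α ⊗ₜ[R] β) = phiAux NE NF α β (comul R V w))
                ?_ ?_ ?_ ?_ hw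
              · rintro _ ⟨l', hl', rfl⟩
                exact ih l' hl' α β
              · simp only [map_zero, Pi.zero_apply]
              · intro x y _ _ hx hy
                simp only [map_add, Pi.add_apply, hx, hy]
              · intro r x _ hx
                simp only [map_smul, Pi.smul_apply, hx]
            have hd : NEF (cA.d X (monAux R t)) (α ⊗ₜ[R] β)
                = phiAux NE NF α β (comul R V (cA.d X (monAux R t))) := by
              apply IHspan
              have := d_monAux_mem hA X t
              rwa [ht] at this
            rw [monAux_cons, hNEF.n_mul_ι, ih t ht α β, hd, comul_d hA,
              ← key α β X (comul R V (monAux R t)), ← comul_ι, ← map_mul]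
  have hv : v ∈ Submodule.span R (Set.range (monAux R (V := V))) := by
    rw [monAux_span_top]; trivial
  refine Submodule.span_induction
    (p := fun w _ => NEF w (α ⊗ₜ[R] β) = phiAux NE NF α β (comul R V w))
    ?_ ?_ ?_ ?_ hv
  · rintro _ ⟨l, rfl⟩
    exact mainmon l.length l rfl α β
  · simp only [map_zero, Pi.zero_apply]
  · intro x y _ _ hx hy
    simp only [map_add, Pi.add_apply, hx, hy]
  · intro r x _ hx
    simp only [map_smul, Pi.smul_apply, hx]
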